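/- Let (g₁,g₂) and (h₁,h₂) be two generating pairs of G = R ⋊_λ ℤ with σ(g₁) = σ(h₁) and σ(g₂) = σ(h₂). Then there exists an automorphism φ of the group G with φ(g₁) = h₁ and φ(g₂) = h₂. -/

import Mathlib

/-- The semidirect product `R ⋊_u ℤ`: underlying set `R × ℤ` with multiplication
`(r, k) · (r', k') = (r + u^k · r', k + k')`, where `u` is a unit of the commutative ring
`R`. -/
def SDP (R : Type*) [CommRing R] (u : Rˣ) : Type _ := R × ℤ

namespace SDP

variable {R : Type*} [CommRing R] {u : Rˣ}

instance : Mul (SDP R u) := ⟨fun g h => (g.1 + ((u ^ g.2 : Rˣ) : R) * h.1, g.2 + h.2)⟩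
instance : One (SDP R u) := ⟨((0 : R), (0 : ℤ))⟩
instance : Inv (SDP R u) := ⟨fun g => (-(((u ^ (-g.2) : Rˣ) : R) * g.1), -g.2)⟩

theorem mul_def (g h : SDP R u) :
    g * h = (g.1 + ((u ^ g.2 : Rˣ) : R) * h.1, g.2 + h.2) := rfl
theorem one_def : (1 : SDP R u) = ((0 : R), (0 : ℤ)) := rfl
theorem inv_def (g : SDP R u) : g⁻¹ = (-(((u ^ (-g.2) : Rˣ) : R) * g.1), -g.2) := rfl

instance instGroup : Group (SDP R u) where
  mul_assoc a b c := by
    rw [mul_def, mul_def, mul_def, mul_def]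
    refine Prod.ext ?_ ?_
    · show (a.1 + ↑(u ^ a.2) * b.1) + ↑(u ^ (a.2 + b.2)) * c.1
        = a.1 + ↑(u ^ a.2) * (b.1 + ↑(u ^ b.2) * c.1)
      rw [zpow_add]; push_cast; ring
    · show (a.2 + b.2) + c.2 = a.2 + (b.2 + c.2); omega
  one_mul a := by
    rw [mul_def, one_def]
    refine Prod.ext ?_ ?_
    · show (0 : R) + ↑(u ^ (0 : ℤ)) * a.1 = a.1; simp
    · show (0 : ℤ) + a.2 = a.2; omega
  mul_one a := by
    rw [mul_def, one_def]
    refine Prod.ext ?_ ?_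
    · show a.1 + ↑(u ^ a.2) * (0 : R) = a.1; simp
    · show a.2 + (0 : ℤ) = a.2; omega
  inv_mul_cancel a := by
    rw [mul_def, inv_def, one_def]
    refine Prod.ext ?_ ?_
    · show -(↑(u ^ (-a.2)) * a.1) + ↑(u ^ (-a.2)) * a.1 = (0 : R); simp
    · show -a.2 + a.2 = (0 : ℤ); omega

end SDP

namespace SDPAux

variable {R : Type*} [CommRing R] {u : Rˣ}

/-- The projection onto `ℤ` as a monoid hom. -/
def sigmaHom (R : Type*) [CommRing R] (u : Rˣ) : SDP R u →* Multiplicative ℤ where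
  toFun g := Multiplicative.ofAdd g.2
  map_one' := rfl
  map_mul' _ _ := rfl

theorem snd_zpow (g : SDP R u) (k : ℤ) : (g ^ k).2 = k * g.2 := by
  have h := map_zpow (sigmaHom R u) g k
  have h2 := congrArg Multiplicative.toAdd h
  simpa [sigmaHom, smul_eq_mul] using h2

/-- The standard element `(1,1)`. -/
def t0 (R : Type*) [CommRing R] (u : Rˣ) : SDP R u := ((1 : R), (1 : ℤ))

/-- The twisted `ν` function: `ν k = 1 + u + ... + u^(k-1)` for `k ≥ 0`, suitably extended. -/
def nu (R : Type*) [CommRing R] (u : Rˣ) (k : ℤ) : R := ((t0 R u) ^ k).1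

theorem nu_one : nu R u 1 = 1 := by rw [nu, zpow_one]; rfl

theorem nu_zero : nu R u 0 = 0 := by rw [nu, zpow_zero]; rfl

theorem nu_add (k l : ℤ) :
    nu R u (k + l) = nu R u k + ((u ^ k : Rˣ) : R) * nu R u l := by
  unfold nu
  rw [zpow_add]
  show (t0 R u ^ k).1 + ((u ^ (t0 R u ^ k).2 : Rˣ) : R) * (t0 R u ^ l).1 = _
  rw [snd_zpow]
  show _ + ((u ^ (k * (1:ℤ)) : Rˣ) : R) * _ = _
  rw [mul_one]

theorem nu_neg (k : ℤ) :
    nu R u (-k) = -(((u ^ (-k) : Rˣ) : R) * nu R u k) := by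
  have h := nu_add (R := R) (u := u) (-k) k
  rw [neg_add_cancel, nu_zero] at h
  linear_combination -h

theorem nu_mul (k m : ℤ) : ∃ p : R, nu R u (k * m) = p * nu R u k := by
  set J := Ideal.span ({nu R u k} : Set R) with hJ
  let S : Subgroup (SDP R u) :=
    { carrier := {g : SDP R u | g.1 ∈ J}
      one_mem' := by show ((0 : R) : R) ∈ J; exact J.zero_mem
      mul_mem' := by
        intro a b ha hb
        show a.1 + ((u ^ a.2 : Rˣ) : R) * b.1 ∈ J
        exact J.add_mem ha (J.mul_mem_left _ hb)
      inv_mem' := by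
        intro a ha
        show -(((u ^ (-a.2) : Rˣ) : R) * a.1) ∈ J
        exact neg_mem (J.mul_mem_left _ ha) }
  have h1 : t0 R u ^ k ∈ S := by
    show (t0 R u ^ k).1 ∈ J
    exact Ideal.subset_span (Set.mem_singleton _)
  have h2 : t0 R u ^ (k * m) ∈ S := by
    rw [zpow_mul]; exact zpow_mem h1 m
  have h3 : nu R u (k * m) ∈ J := h2
  rw [Ideal.mem_span_singleton'] at h3
  obtain ⟨p, hp⟩ := h3
  exact ⟨p, hp.symm⟩

theorem exists_bezout (g₁ g₂ : SDP R u)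
    (hg : Subgroup.closure ({g₁, g₂} : Set (SDP R u)) = ⊤) :
    ∃ x y : ℤ, x * g₁.2 + y * g₂.2 = 1 := by
  let S : Subgroup (SDP R u) :=
    { carrier := {g : SDP R u | ∃ x y : ℤ, g.2 = x * g₁.2 + y * g₂.2}
      one_mem' := ⟨0, 0, by show (0 : ℤ) = _; ring⟩
      mul_mem' := by
        rintro a b ⟨x, y, hx⟩ ⟨x', y', hx'⟩
        exact ⟨x + x', y + y', by show a.2 + b.2 = _; rw [hx, hx']; ring⟩
      inv_mem' := by
        rintro a ⟨x, y, hx⟩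
        exact ⟨-x, -y, by show -a.2 = _; rw [hx]; ring⟩ }
  have hsub : Subgroup.closure ({g₁, g₂} : Set (SDP R u)) ≤ S := by
    rw [Subgroup.closure_le]
    rintro g (rfl | rfl)
    · exact ⟨1, 0, by ring⟩
    · exact ⟨0, 1, by ring⟩
  rw [hg] at hsub
  obtain ⟨x, y, h⟩ := hsub (Subgroup.mem_top (t0 R u))
  exact ⟨x, y, h.symm⟩

theorem delta_isUnit (g₁ g₂ : SDP R u)
    (hg : Subgroup.closure ({g₁, g₂} : Set (SDP R u)) = ⊤)
    (α β : R) (hαβ : α * nu R u g₁.2 + β * nu R u g₂.2 = 1) :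
    IsUnit (g₁.1 * nu R u g₂.2 - g₂.1 * nu R u g₁.2) := by
  set δ := g₁.1 * nu R u g₂.2 - g₂.1 * nu R u g₁.2 with hδ
  set a := α * g₁.1 + β * g₂.1 with ha
  set J := Ideal.span ({δ} : Set R) with hJ
  have hδJ : δ ∈ J := Ideal.subset_span (Set.mem_singleton _)
  let S : Subgroup (SDP R u) :=
    { carrier := {g : SDP R u | g.1 - a * nu R u g.2 ∈ J}
      one_mem' := by
        show (0 : R) - a * nu R u 0 ∈ J
        rw [nu_zero]; simpa using J.zero_mem
      mul_mem' := by
        intro p q hp hq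
        show (p.1 + ((u ^ p.2 : Rˣ) : R) * q.1) - a * nu R u (p.2 + q.2) ∈ J
        rw [nu_add]
        have heq : (p.1 + ((u ^ p.2 : Rˣ) : R) * q.1)
            - a * (nu R u p.2 + ((u ^ p.2 : Rˣ) : R) * nu R u q.2)
            = (p.1 - a * nu R u p.2)
              + ((u ^ p.2 : Rˣ) : R) * (q.1 - a * nu R u q.2) := by ring
        rw [heq]
        exact J.add_mem hp (J.mul_mem_left _ hq)
      inv_mem' := by
        intro p hp
        show -(((u ^ (-p.2) : Rˣ) : R) * p.1) - a * nu R u (-p.2) ∈ J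
        rw [nu_neg]
        have heq : -(((u ^ (-p.2) : Rˣ) : R) * p.1)
            - a * -(((u ^ (-p.2) : Rˣ) : R) * nu R u p.2)
            = -(((u ^ (-p.2) : Rˣ) : R) * (p.1 - a * nu R u p.2)) := by ring
        rw [heq]
        exact neg_mem (J.mul_mem_left _ hp) }
  have hg1 : g₁ ∈ S := by
    show g₁.1 - a * nu R u g₁.2 ∈ J
    have heq : g₁.1 - a * nu R u g₁.2 = β * δ := by
      rw [hδ, ha]; linear_combination (-g₁.1) * hαβ
    rw [heq]
    exact J.mul_mem_left _ hδJ
  have hg2 : g₂ ∈ S := by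
    show g₂.1 - a * nu R u g₂.2 ∈ J
    have heq : g₂.1 - a * nu R u g₂.2 = -α * δ := by
      rw [hδ, ha]; linear_combination (-g₂.1) * hαβ
    rw [heq]
    exact J.mul_mem_left _ hδJ
  have hsub : Subgroup.closure ({g₁, g₂} : Set (SDP R u)) ≤ S := by
    rw [Subgroup.closure_le]
    rintro g (rfl | rfl)
    · exact hg1
    · exact hg2
  rw [hg] at hsub
  have h1 : (((1 : R), (0 : ℤ)) : SDP R u) ∈ S :=
    hsub (Subgroup.mem_top _)
  have h2 : (1 : R) - a * nu R u 0 ∈ J := h1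
  rw [nu_zero, mul_zero, sub_zero, Ideal.mem_span_singleton'] at h2
  obtain ⟨p, hp⟩ := h2
  exact IsUnit.of_mul_eq_one (a := δ) p (by linear_combination hp)

end SDPAux

open SDPAux

/-- Let `R` be a commutative ring generated by a unit `λ ≠ 1` and its inverse, and let
`G = R ⋊_λ ℤ` with projection `σ = (·.2) : G → ℤ`.  If `(g₁, g₂)` and `(h₁, h₂)` are two
generating pairs of `G` with `σ g₁ = σ h₁` and `σ g₂ = σ h₂`, then some automorphism of `G`
carries `(g₁, g₂)` to `(h₁, h₂)`. -/
theorem sdp_exists_automorphism_of_sigma_eq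
    {R : Type*} [CommRing R] (u : Rˣ) (hu : (u : R) ≠ 1)
    (hgen : Subring.closure ({(u : R), ((u⁻¹ : Rˣ) : R)} : Set R) = ⊤)
    (g₁ g₂ h₁ h₂ : SDP R u)
    (hg : Subgroup.closure ({g₁, g₂} : Set (SDP R u)) = ⊤)
    (hh : Subgroup.closure ({h₁, h₂} : Set (SDP R u)) = ⊤)
    (hσ₁ : g₁.2 = h₁.2) (hσ₂ : g₂.2 = h₂.2) :
    ∃ φ : SDP R u ≃* SDP R u, φ g₁ = h₁ ∧ φ g₂ = h₂ := by
  obtain ⟨x, y, hxy⟩ := exists_bezout g₁ g₂ hg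
  obtain ⟨p, hp⟩ := nu_mul (R := R) (u := u) g₁.2 x
  obtain ⟨q, hq⟩ := nu_mul (R := R) (u := u) g₂.2 y
  set α : R := p with hα
  set β : R := ((u ^ (g₁.2 * x) : Rˣ) : R) * q with hβ
  have hαβ : α * nu R u g₁.2 + β * nu R u g₂.2 = 1 := by
    have h1 : nu R u (g₁.2 * x + g₂.2 * y)
        = nu R u (g₁.2 * x) + ((u ^ (g₁.2 * x) : Rˣ) : R) * nu R u (g₂.2 * y) :=
      nu_add _ _
    have hxy' : g₁.2 * x + g₂.2 * y = 1 := by linear_combination hxy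
    rw [hxy', nu_one, hp, hq] at h1
    rw [hα, hβ]; linear_combination -h1
  have hαβh : α * nu R u h₁.2 + β * nu R u h₂.2 = 1 := by
    rw [← hσ₁, ← hσ₂]; exact hαβ
  have hδg := delta_isUnit g₁ g₂ hg α β hαβ
  have hδh := delta_isUnit h₁ h₂ hh α β hαβh
  rw [← hσ₁, ← hσ₂] at hδh
  obtain ⟨dg, hdg⟩ := hδg
  obtain ⟨dh, hdh⟩ := hδh
  set c : Rˣ := dh * dg⁻¹ with hc0
  have hc : (c : R) * (g₁.1 * nu R u g₂.2 - g₂.1 * nu R u g₁.2)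
      = h₁.1 * nu R u g₂.2 - h₂.1 * nu R u g₁.2 := by
    have h2 : (c : R) * (dg : R) = (dh : R) := by
      rw [hc0, Units.val_mul, mul_assoc, Units.inv_mul, mul_one]
    rw [hdg, hdh] at h2
    exact h2
  set a₀ : R := α * (h₁.1 - (c : R) * g₁.1) + β * (h₂.1 - (c : R) * g₂.1) with ha₀
  have E₁ : (c : R) * g₁.1 + a₀ * nu R u g₁.2 = h₁.1 := by
    rw [ha₀]
    linear_combination (h₁.1 - (c : R) * g₁.1) * hαβ + β * hc
  have E₂ : (c : R) * g₂.1 + a₀ * nu R u g₂.2 = h₂.1 := by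
    rw [ha₀]
    linear_combination (h₂.1 - (c : R) * g₂.1) * hαβ - α * hc
  have hcc : ((c⁻¹ : Rˣ) : R) * (c : R) = 1 := by
    rw [← Units.val_mul, inv_mul_cancel, Units.val_one]
  have hcc' : (c : R) * ((c⁻¹ : Rˣ) : R) = 1 := by
    rw [← Units.val_mul, mul_inv_cancel, Units.val_one]
  refine ⟨{ toFun := fun g => ((c : R) * g.1 + a₀ * nu R u g.2, g.2)
            invFun := fun g => (((c⁻¹ : Rˣ) : R) * (g.1 - a₀ * nu R u g.2), g.2)
            left_inv := ?_
            right_inv := ?_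
            map_mul' := ?_ }, ?_, ?_⟩
  · intro g
    refine Prod.ext ?_ rfl
    show ((c⁻¹ : Rˣ) : R) * (((c : R) * g.1 + a₀ * nu R u g.2) - a₀ * nu R u g.2) = g.1
    linear_combination g.1 * hcc
  · intro g
    refine Prod.ext ?_ rfl
    show (c : R) * (((c⁻¹ : Rˣ) : R) * (g.1 - a₀ * nu R u g.2)) + a₀ * nu R u g.2 = g.1
    linear_combination (g.1 - a₀ * nu R u g.2) * hcc'
  · intro g h
    refine Prod.ext ?_ rfl
    show (c : R) * (g.1 + ((u ^ g.2 : Rˣ) : R) * h.1) + a₀ * nu R u (g.2 + h.2)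
        = ((c : R) * g.1 + a₀ * nu R u g.2)
          + ((u ^ g.2 : Rˣ) : R) * ((c : R) * h.1 + a₀ * nu R u h.2)
    rw [nu_add]; ring
  · exact Prod.ext E₁ hσ₁
  · exact Prod.ext E₂ hσ₂
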